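/- The fractional coloring index coding scheme is a valid index code with locality 1 and broadcast rate a/b, for any a:b coloring of the interference graph; hence β_G*(1) ≤ χ_f(Ḡ_u). -/

import Mathlib

open Finset

/-- A unicast index coding problem on `N` receivers: receiver `i` demands message `i`
and knows messages indexed by `K i` as side information, with `i ∉ K i`. -/
structure IndexProblem (N : ℕ) where
  K : Fin N → Finset (Fin N)
  not_self : ∀ i, i ∉ K i

/-- A valid index code over alphabet `A` with message length `m` and codeword length `ℓ`:
an encoder together with query sets `R i`, such that receiver `i` can decode `x i`
exactly from the queried codeword symbols `c_{R i}` and its side information. -/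
structure IndexCode (N : ℕ) (G : IndexProblem N) (A : Type*) (m ℓ : ℕ) where
  enc : (Fin N → Fin m → A) → Fin ℓ → A
  R : Fin N → Finset (Fin ℓ)
  valid : ∀ (i : Fin N) (x y : Fin N → Fin m → A),
    (∀ t ∈ R i, enc x t = enc y t) → (∀ j ∈ G.K i, x j = y j) → x i = y i

/-- The optimal broadcast rate function `β_G^*(r)`: the infimum of broadcast rates `ℓ/m`
over all message lengths `m ≥ 1` and valid index codes with locality at most `r`. -/
noncomputable def betaStar (A : Type*) {N : ℕ} (G : IndexProblem N) (r : ℝ) : ℝ :=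
  sInf {β : ℝ | ∃ (m ℓ : ℕ) (_ : 0 < m) (C : IndexCode N G A m ℓ),
    (∀ i, ((C.R i).card : ℝ) ≤ r * m) ∧ β = (ℓ : ℝ) / m}

/-- An `a:b` coloring of the interference graph of `G`: each vertex gets a set of `b` colors
from `[a]`, and vertices joined by an edge of the interference graph (i.e. `i ≠ j` with
`i ∉ K j` or `j ∉ K i`) receive disjoint color sets. -/
def IsABColoring {N : ℕ} (G : IndexProblem N) (a b : ℕ) (C : Fin N → Finset (Fin a)) : Prop :=
  (∀ i, (C i).card = b) ∧
  ∀ i j, i ≠ j → (i ∉ G.K j ∨ j ∉ G.K i) → Disjoint (C i) (C j)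

/-- The fractional chromatic number `χ_f` of the interference graph of `G`, as the
infimum of `a/b` over all `a:b` colorings. -/
noncomputable def fracChrom {N : ℕ} (G : IndexProblem N) : ℝ :=
  sInf {q : ℝ | ∃ (a b : ℕ) (C : Fin N → Finset (Fin a)),
    0 < b ∧ IsABColoring G a b C ∧ q = (a : ℝ) / b}

/-- for any `a:b` coloring of the interference graph, the fractional-coloring
scheme gives a valid index code with message length `b`, codeword length `a` (broadcast rate
`a/b`) and locality `1`; hence `β_G^*(1) ≤ χ_f(Ḡ_u)`. -/
theorem fractional_coloring_achievability {N : ℕ} (G : IndexProblem N) (A : Type*)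
    [Fintype A] [DecidableEq A] [AddCommGroup A] (hA : 1 < Fintype.card A) :
    (∀ (a b : ℕ) (Col : Fin N → Finset (Fin a)), 0 < b → IsABColoring G a b Col →
      ∃ C : IndexCode N G A b a, ∀ i, (C.R i).card ≤ b) ∧
    betaStar A G 1 ≤ fracChrom G := by
  have key : ∀ (a b : ℕ) (Col : Fin N → Finset (Fin a)), 0 < b → IsABColoring G a b Col →
      ∃ C : IndexCode N G A b a, ∀ i, (C.R i).card = b := by
    intro a b Col hb hcol
    obtain ⟨hcard, hdisj⟩ := hcol
    refine ⟨⟨fun x t => ∑ j : Fin N, if h : t ∈ Col j then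
        x j (((Col j).orderIsoOfFin (hcard j)).symm ⟨t, h⟩) else 0,
      fun i => Col i, ?_⟩, fun i => hcard i⟩
    intro i x y henc hside
    funext s
    set t := (((Col i).orderIsoOfFin (hcard i)) s : Fin a) with ht
    have hti : t ∈ Col i := (((Col i).orderIsoOfFin (hcard i)) s).2
    have hencxy := henc t hti
    have hsum : ∀ j ∈ (univ : Finset (Fin N)).erase i,
        (if h : t ∈ Col j then x j (((Col j).orderIsoOfFin (hcard j)).symm ⟨t, h⟩) else 0)
        = (if h : t ∈ Col j then y j (((Col j).orderIsoOfFin (hcard j)).symm ⟨t, h⟩) else 0) := by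
      intro j hj
      have hji : j ≠ i := Finset.ne_of_mem_erase hj
      by_cases h : t ∈ Col j
      · have hjK : j ∈ G.K i := by
          by_contra hK
          exact (Finset.disjoint_left.mp (hdisj j i hji (Or.inl hK)) h) hti
        simp only [h, dif_pos, hside j hjK]
      · simp [h]
    rw [← Finset.add_sum_erase _ _ (Finset.mem_univ i),
        ← Finset.add_sum_erase _ _ (Finset.mem_univ i),
        Finset.sum_congr rfl hsum] at hencxy
    have hterm := add_right_cancel hencxy
    rw [dif_pos hti, dif_pos hti] at hterm
    have hsub : (⟨t, hti⟩ : {x // x ∈ Col i}) = ((Col i).orderIsoOfFin (hcard i)) s :=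
      Subtype.ext rfl
    rwa [hsub, OrderIso.symm_apply_apply] at hterm
  constructor
  · intro a b Col hb hcol
    obtain ⟨C, hC⟩ := key a b Col hb hcol
    exact ⟨C, fun i => (hC i).le⟩
  · unfold betaStar fracChrom
    have hbdd : BddBelow {β : ℝ | ∃ (m ℓ : ℕ) (_ : 0 < m) (C : IndexCode N G A m ℓ),
        (∀ i, ((C.R i).card : ℝ) ≤ 1 * m) ∧ β = (ℓ : ℝ) / m} := by
      refine ⟨0, fun β hβ => ?_⟩
      obtain ⟨m, ℓ, hm, C, hloc, rfl⟩ := hβ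
      positivity
    have hne : {q : ℝ | ∃ (a b : ℕ) (C : Fin N → Finset (Fin a)),
        0 < b ∧ IsABColoring G a b C ∧ q = (a : ℝ) / b}.Nonempty := by
      refine ⟨(N : ℝ) / 1, N, 1, fun i => {i}, one_pos, ⟨fun i => rfl, ?_⟩, by norm_num⟩
      intro i j hij _
      simp [Finset.disjoint_singleton]; exact fun h => hij h
    refine csInf_le_csInf hbdd hne ?_
    rintro q ⟨a, b, Col, hb, hcol, rfl⟩
    obtain ⟨C, hC⟩ := key a b Col hb hcol
    refine ⟨b, a, hb, C, fun i => ?_, rfl⟩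
    rw [hC i, one_mul]
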